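/- arXiv:0801.3365 — 3 statements merged into one kernel-verified Lean document; each statement's English description precedes it below -/
import Mathlib

section
/- If a poset K is upward directed, then K is simply connected: every loop based at a 0-simplex a is homotopic to the trivial (degenerate) loop at a, where homotopy is generated by elementary deformations via 2-simplices. -/
/-- A 1-simplex of a poset `K`: two faces and a support dominating both. -/
structure OneSimplex (K : Type*) [PartialOrder K] where
  face0 : K
  face1 : K
  supp : K
  le0 : face0 ≤ supp
  le1 : face1 ≤ supp

/-- The reverse of a 1-simplex: same support, exchanged faces. -/
def OneSimplex.rev {K : Type*} [PartialOrder K] (b : OneSimplex K) : OneSimplex K :=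
  ⟨b.face1, b.face0, b.supp, b.le1, b.le0⟩

/-- The degenerate 1-simplex `σ₀ a` at a 0-simplex `a`. -/
def OneSimplex.degenerate {K : Type*} [PartialOrder K] (a : K) : OneSimplex K :=
  ⟨a, a, a, le_refl a, le_refl a⟩

/-- A 2-simplex of a poset `K`, presented by its three vertices, the supports of its
three faces, and its own support, with all required order relations. Its faces
`∂₀c, ∂₁c, ∂₂c` satisfy the simplicial identities by construction. -/
structure TwoSimplex (K : Type*) [PartialOrder K] where
  vstart : K
  vmid : K
  vend : K
  s0 : K
  s1 : K
  s2 : K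
  supp : K
  hs0 : s0 ≤ supp
  hs1 : s1 ≤ supp
  hs2 : s2 ≤ supp
  h0s : vmid ≤ s0
  h0e : vend ≤ s0
  h1s : vstart ≤ s1
  h1e : vend ≤ s1
  h2s : vstart ≤ s2
  h2e : vmid ≤ s2

/-- The face `∂₀c` (from `vmid` to `vend`). -/
def TwoSimplex.face0 {K : Type*} [PartialOrder K] (c : TwoSimplex K) : OneSimplex K :=
  ⟨c.vend, c.vmid, c.s0, c.h0e, c.h0s⟩

/-- The face `∂₁c` (from `vstart` to `vend`). -/
def TwoSimplex.face1 {K : Type*} [PartialOrder K] (c : TwoSimplex K) : OneSimplex K :=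
  ⟨c.vend, c.vstart, c.s1, c.h1e, c.h1s⟩

/-- The face `∂₂c` (from `vstart` to `vmid`). -/
def TwoSimplex.face2 {K : Type*} [PartialOrder K] (c : TwoSimplex K) : OneSimplex K :=
  ⟨c.vmid, c.vstart, c.s2, c.h2e, c.h2s⟩

/-- A path in the poset `K` from `x` to `y`: a nonempty composable string of
1-simplices, `∂₁` of the first being `x` and `∂₀` of the last being `y`. -/
inductive PPath (K : Type*) [PartialOrder K] : K → K → Type _
  | single (b : OneSimplex K) : PPath K b.face1 b.face0
  | cons (b : OneSimplex K) {x : K} (p : PPath K x b.face1) : PPath K x b.face0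

/-- Composition of paths: `q.comp p` first traverses `p`, then `q`. -/
def PPath.comp {K : Type*} [PartialOrder K] : ∀ {x y w : K}, PPath K y w → PPath K x y → PPath K x w
  | _, _, _, .single b, p => .cons b p
  | _, _, _, .cons b q, p => .cons b (q.comp p)

/-- The reverse of a path. -/
def PPath.rev {K : Type*} [PartialOrder K] : ∀ {x y : K}, PPath K x y → PPath K y x
  | _, _, .single b => .single b.rev
  | _, _, .cons b p => PPath.comp p.rev (.single b.rev)

/-- Multiplicative extension of a function on 1-simplices to paths:
`z(bₙ * ⋯ * b₁) = z(bₙ) ⋯ z(b₁)`. -/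
def PPath.eval {K : Type*} [PartialOrder K] {M : Type*} [Monoid M]
    (z : OneSimplex K → M) : ∀ {x y : K}, PPath K x y → M
  | _, _, .single b => z b
  | _, _, .cons b p => z b * p.eval z

/-- The support of the path is causally disjoint from `o` (every 1-simplex of the path
has support `⊥ o`). -/
def PPath.suppDisjoint {K : Type*} [PartialOrder K] (perp : K → K → Prop) (o : K) :
    ∀ {x y : K}, PPath K x y → Prop
  | _, _, .single b => perp b.supp o
  | _, _, .cons b p => perp b.supp o ∧ p.suppDisjoint perp o

/-- Homotopy of paths with the same endpoints: the equivalence relation generated by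
elementary deformations (replacing `∂₁c` by `∂₀c * ∂₂c` for a 2-simplex `c`), compatible
with composition. -/
inductive PHomotopic {K : Type*} [PartialOrder K] : ∀ {x y : K}, PPath K x y → PPath K x y → Prop
  | refl {x y : K} (p : PPath K x y) : PHomotopic p p
  | symm {x y : K} {p q : PPath K x y} : PHomotopic p q → PHomotopic q p
  | trans {x y : K} {p q r : PPath K x y} : PHomotopic p q → PHomotopic q r → PHomotopic p r
  | deform (c : TwoSimplex K) :
      PHomotopic (.single c.face1) ((PPath.single c.face0).comp (.single c.face2))
  | comp_congr {x y w : K} {q q' : PPath K y w} {p p' : PPath K x y} :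
      PHomotopic q q' → PHomotopic p p' → PHomotopic (q.comp p) (q'.comp p')

theorem upward_directed_simply_connected {K : Type*} [PartialOrder K]
    (hdir : ∀ a₁ a₂ : K, ∃ a₃ : K, a₁ ≤ a₃ ∧ a₂ ≤ a₃) :
    ∀ (a : K) (ℓ : PPath K a a),
      PHomotopic ℓ (PPath.single (OneSimplex.degenerate a)) := by
  have key : ∀ {x y : K} (p : PPath K x y) (s : K) (hx : x ≤ s) (hy : y ≤ s),
      PHomotopic p (PPath.single (⟨y, x, s, hy, hx⟩ : OneSimplex K)) := by
    intro x y p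
    induction p with
    | single b =>
      intro s hx hy
      obtain ⟨w, hbw, hsw⟩ := hdir b.supp s
      have h1 : PHomotopic (PPath.single b)
          ((PPath.single (⟨b.face0, b.face0, w, b.le0.trans hbw, b.le0.trans hbw⟩ : OneSimplex K)).comp
            (PPath.single (⟨b.face0, b.face1, w, b.le0.trans hbw, b.le1.trans hbw⟩ : OneSimplex K))) :=
        PHomotopic.deform ⟨b.face1, b.face0, b.face0, w, b.supp, w, w,
          le_refl w, hbw, le_refl w,
          b.le0.trans hbw, b.le0.trans hbw, b.le1, b.le0,
          b.le1.trans hbw, b.le0.trans hbw⟩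
      have h2 : PHomotopic (PPath.single (⟨b.face0, b.face1, s, hy, hx⟩ : OneSimplex K))
          ((PPath.single (⟨b.face0, b.face0, w, b.le0.trans hbw, b.le0.trans hbw⟩ : OneSimplex K)).comp
            (PPath.single (⟨b.face0, b.face1, w, b.le0.trans hbw, b.le1.trans hbw⟩ : OneSimplex K))) :=
        PHomotopic.deform ⟨b.face1, b.face0, b.face0, w, s, w, w,
          le_refl w, hsw, le_refl w,
          b.le0.trans hbw, b.le0.trans hbw, hx, hy,
          b.le1.trans hbw, b.le0.trans hbw⟩
      exact h1.trans h2.symm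
    | cons b p ih =>
      intro s hx hy
      obtain ⟨t, hbt, hst⟩ := hdir b.supp s
      have hp : PHomotopic p (PPath.single (⟨b.face1, _, t, b.le1.trans hbt, hx.trans hst⟩ : OneSimplex K)) :=
        ih t (hx.trans hst) (b.le1.trans hbt)
      have h1 : PHomotopic (PPath.cons b p)
          ((PPath.single b).comp (PPath.single (⟨b.face1, _, t, b.le1.trans hbt, hx.trans hst⟩ : OneSimplex K))) :=
        PHomotopic.comp_congr (PHomotopic.refl (PPath.single b)) hp
      have h2 : PHomotopic (PPath.single (⟨b.face0, _, s, hy, hx⟩ : OneSimplex K))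
          ((PPath.single b).comp (PPath.single (⟨b.face1, _, t, b.le1.trans hbt, hx.trans hst⟩ : OneSimplex K))) :=
        PHomotopic.deform ⟨_, b.face1, b.face0, b.supp, s, t, t,
          hbt, hst, le_refl t,
          b.le1, b.le0, hx, hy,
          hx.trans hst, b.le1.trans hbt⟩
      exact h1.trans h2.symm
  intro a ℓ
  exact key ℓ a le_rfl le_rfl
end

section
/- Homotopic invariance of 1-cocycles: if p and q are homotopic paths in a poset K (same endpoints, related by a finite sequence of elementary deformations), then z(p) = z(q) for any unitary-valued 1-cocycle z. -/
theorem PPath.eval_comp {K : Type*} [PartialOrder K] {M : Type*} [Monoid M]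
    (z : OneSimplex K → M) : ∀ {x y w : K} (q : PPath K y w) (p : PPath K x y),
    (q.comp p).eval z = q.eval z * p.eval z
  | _, _, _, .single b, p => rfl
  | _, _, _, .cons b q, p => by
    simp [PPath.comp, PPath.eval, eval_comp z q p, mul_assoc]

theorem cocycle_homotopy_invariance {K : Type*} [PartialOrder K]
    {H : Type*} [NormedAddCommGroup H] [InnerProductSpace ℂ H] [CompleteSpace H]
    (z : OneSimplex K → (H →L[ℂ] H))
    (hzu : ∀ b : OneSimplex K, z b ∈ unitary (H →L[ℂ] H))
    (hzc : ∀ c : TwoSimplex K, z c.face0 * z c.face2 = z c.face1) :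
    ∀ {x y : K} (p q : PPath K x y), PHomotopic p q → p.eval z = q.eval z := by
  intro x y p q h
  induction h with
  | refl p => rfl
  | symm _ ih => exact ih.symm
  | trans _ _ ih1 ih2 => exact ih1.trans ih2
  | deform c =>
    refine Eq.trans ?_ (PPath.eval_comp z _ _).symm
    exact (hzc c).symm
  | comp_congr _ _ ih1 ih2 =>
    rw [PPath.eval_comp, PPath.eval_comp, ih1, ih2]
end

section
/- A topologically trivial unitary net representation is equivalent to one with trivial ψ: if {π, ψ} is a unitary net representation whose associated 1-cocycle ζ^π is a 1-coboundary, i.e. ζ^π(b) = W*_{∂₀b} W_{∂₁b} for unitaries W_a, then setting ρ_a(A) := W_a π_a(A) W_a*, the family W is a unitary intertwiner from {π, ψ} to {ρ, 𝟙}, where 𝟙 assigns the identity operator to every inclusion. -/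
theorem topologically_trivial_rep_has_trivial_form {K : Type*} [PartialOrder K]
    {H : Type*} [NormedAddCommGroup H] [InnerProductSpace ℂ H] [CompleteSpace H]
    (hconn : ∀ x y : K, Nonempty (PPath K x y))
    (A : K → Type*) [∀ a, Ring (A a)] [∀ a, Algebra ℂ (A a)] [∀ a, StarRing (A a)]
    (j : ∀ ⦃a b : K⦄, b ≤ a → (A b →⋆ₐ[ℂ] A a))
    (hj : ∀ ⦃a b c : K⦄ (h₁ : b ≤ a) (h₂ : c ≤ b) (x : A c),
      j h₁ (j h₂ x) = j (h₂.trans h₁) x)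
    (π : ∀ a : K, A a →⋆ₐ[ℂ] (H →L[ℂ] H))
    (ψ : ∀ ⦃a b : K⦄, b ≤ a → (H →L[ℂ] H))
    (hψu : ∀ ⦃a b : K⦄ (h : b ≤ a), ψ h ∈ unitary (H →L[ℂ] H))
    (hψπ : ∀ ⦃a b : K⦄ (h : b ≤ a) (x : A b),
      ψ h * π b x = π a (j h x) * ψ h)
    (hψc : ∀ ⦃a b c : K⦄ (h₁ : b ≤ a) (h₂ : c ≤ b),
      ψ h₁ * ψ h₂ = ψ (h₂.trans h₁))
    (W : K → (H →L[ℂ] H))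
    (hWu : ∀ a : K, W a ∈ unitary (H →L[ℂ] H))
    (hcob : ∀ b : OneSimplex K,
      star (ψ b.le0) * ψ b.le1 = star (W b.face0) * W b.face1) :
    (∀ (a : K) (x : A a),
        W a * π a x = (W a * π a x * star (W a)) * W a) ∧
    (∀ ⦃a b : K⦄ (h : b ≤ a), W a * ψ h = (1 : H →L[ℂ] H) * W b) := by
  have hψ1 : ∀ a : K, ψ (le_refl a) = 1 := by
    intro a
    have h1 := hψc (le_refl a) (le_refl a)
    have hu := hψu (le_refl a)
    have hs := hu.1
    have h1' : ψ (le_refl a) * ψ (le_refl a) = ψ (le_refl a) := h1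
    have key : ψ (le_refl a) = star (ψ (le_refl a)) * (ψ (le_refl a) * ψ (le_refl a)) := by
      rw [← mul_assoc, hs, one_mul]
    rw [h1', hs] at key
    exact key
  constructor
  · intro a x
    rw [mul_assoc, (hWu a).1, mul_one]
  · intro a b h
    have hc := hcob ⟨b, a, a, h, le_refl a⟩
    simp only [hψ1] at hc
    rw [mul_one] at hc
    have hc' : ψ h = star (W a) * W b := by
      have := congrArg star hc
      simpa [star_mul] using this
    rw [hc', ← mul_assoc, (hWu a).2, one_mul]
end
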